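/- Root sampling computes the correct Bayesian posterior (Lemma 1, measure-theoretic version): Let Θ be a measurable space equipped with a prior probability measure b₀, let S and A be countable state and action types, and let (θ, s, a, s') ↦ P_θ(s' | s, a) be a jointly measurable nonnegative likelihood with ∑_{s'} P_θ(s' | s, a) = 1 for every θ, s, a. For a history h = (s₀, [(a₁,s₁),…,(a_n,s_n)]), let L_h(θ) = ∏_{t=1}^{n} P_θ(s_t | s_{t−1}, a_t) and define the true posterior measure b(· | h) as the measure with density L_h / (∫ L_h dθ db₀) with respect to b₀, assuming 0 < ∫ L_h db₀ < ∞. Define the root-sampling measures recursively: b̃(· | (s₀,[])) = b₀, and b̃(· | h·(a,s')) is the measure with density θ ↦ P_θ(s' | s_h, a) / (∫ P_{θ'}(s' | s_h, a) db̃(θ' | h)) with respect to b̃(· | h), where s_h is the last state of h, assuming the normalizer is strictly positive and finite. Then for every history h all of whose normalizers are strictly positive and finite, b̃(· | h) = b(· | h) as measures on Θ. -/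

import Mathlib

open scoped ENNReal
open MeasureTheory

/-- The last state of a history `(s₀, [(a₁,s₁),…,(aₙ,sₙ)])`. -/
def lastState {S A : Type*} (s₀ : S) (l : List (A × S)) : S :=
  l.getLast?.elim s₀ Prod.snd

/-- Likelihood `L_h(θ) = ∏ₜ P_θ(sₜ | sₜ₋₁, aₜ)` of the transitions of a history under
parameter `θ`, starting from state `s`. -/
noncomputable def lik {Θ S A : Type*} (P : Θ → S → A → S → ℝ≥0∞) (θ : Θ) :
    S → List (A × S) → ℝ≥0∞
  | _, [] => 1
  | s, (a, s') :: rest => P θ s a s' * lik P θ s' rest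

/-- The root-sampling measures: starting from the prior, each observed transition
reweights the current belief measure by the density
`θ ↦ P_θ(s' | s_h, a) / ∫ P_θ'(s' | s_h, a) db̃(θ' | h)`,
processing the transitions of the history in order. -/
noncomputable def rootSamplingMeasure {Θ S A : Type*} [MeasurableSpace Θ]
    (P : Θ → S → A → S → ℝ≥0∞) :
    Measure Θ → S → List (A × S) → Measure Θ
  | μ, _, [] => μ
  | μ, s, (a, s') :: rest =>
      rootSamplingMeasure P
        (μ.withDensity fun θ => P θ s a s' / ∫⁻ θ', P θ' s a s' ∂μ) s' rest

private lemma lastState_cons {S A : Type*} (s : S) (a : A) (s' : S) (l : List (A × S)) :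
    lastState s ((a, s') :: l) = lastState s' l := by
  cases l with
  | nil => rfl
  | cons x xs =>
      simp only [lastState, List.getLast?_cons_cons]
      cases h : (x :: xs).getLast? with
      | none => simp at h
      | some y => rfl

private lemma lik_append {Θ S A : Type*} (P : Θ → S → A → S → ℝ≥0∞) (θ : Θ) :
    ∀ (l₁ l₂ : List (A × S)) (s : S),
      lik P θ s (l₁ ++ l₂) = lik P θ s l₁ * lik P θ (lastState s l₁) l₂
  | [], l₂, s => by simp [lik, lastState]
  | (a, s') :: rest, l₂, s => by
      simp [lik, lik_append P θ rest l₂ s', lastState_cons, mul_assoc]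

private lemma rSM_append {Θ S A : Type*} [MeasurableSpace Θ] (P : Θ → S → A → S → ℝ≥0∞) :
    ∀ (l₁ l₂ : List (A × S)) (μ : Measure Θ) (s : S),
      rootSamplingMeasure P μ s (l₁ ++ l₂)
        = rootSamplingMeasure P (rootSamplingMeasure P μ s l₁) (lastState s l₁) l₂
  | [], l₂, μ, s => by simp [rootSamplingMeasure, lastState]
  | (a, s') :: rest, l₂, μ, s => by
      simp only [List.cons_append, List.append_eq, rootSamplingMeasure,
        rSM_append P rest l₂ _ s', lastState_cons]

private lemma lik_measurable {Θ S A : Type*} [MeasurableSpace Θ]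
    (P : Θ → S → A → S → ℝ≥0∞)
    (hPmeas : ∀ (s : S) (a : A) (s' : S), Measurable fun θ => P θ s a s') :
    ∀ (l : List (A × S)) (s : S), Measurable fun θ => lik P θ s l
  | [], s => by simpa [lik] using measurable_const
  | (a, s') :: rest, s => by
      simpa [lik] using (show Measurable fun θ => P θ s a s' * lik P θ s' rest from
        (hPmeas s a s').mul (lik_measurable P hPmeas rest s'))

/-- **Lemma 1 (measure-theoretic version): root sampling computes the correct Bayesian
posterior.** Let `b₀` be a prior probability measure on a measurable parameter space `Θ`,
let `S` and `A` be countable state and action types, and let `P θ s a s'` be a measurable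
nonnegative likelihood with `∑_{s'} P θ s a s' = 1`. If every batch normalizer
`∫⁻ L_{h'} db₀` along the history is strictly positive and finite, and every one-step
root-sampling normalizer is strictly positive and finite, then the root-sampling measure
at the history equals the true posterior measure, i.e. the measure with density
`L_h / ∫⁻ L_h db₀` with respect to `b₀`. -/
theorem rootSamplingMeasure_eq_posterior {Θ S A : Type*} [MeasurableSpace Θ]
    [Countable S] [Countable A]
    (b₀ : Measure Θ) [IsProbabilityMeasure b₀]
    (P : Θ → S → A → S → ℝ≥0∞)
    (hPmeas : ∀ (s : S) (a : A) (s' : S), Measurable fun θ => P θ s a s')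
    (hPsum : ∀ (θ : Θ) (s : S) (a : A), ∑' s' : S, P θ s a s' = 1)
    (s₀ : S) (l : List (A × S))
    (hZpos : ∀ n, 0 < ∫⁻ θ, lik P θ s₀ (l.take n) ∂b₀)
    (hZfin : ∀ n, ∫⁻ θ, lik P θ s₀ (l.take n) ∂b₀ < ∞)
    (hZtildePos : ∀ (n : ℕ) (hn : n < l.length),
      0 < ∫⁻ θ', P θ' (lastState s₀ (l.take n)) (l.get ⟨n, hn⟩).1 (l.get ⟨n, hn⟩).2
            ∂(rootSamplingMeasure P b₀ s₀ (l.take n)))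
    (hZtildeFin : ∀ (n : ℕ) (hn : n < l.length),
      (∫⁻ θ', P θ' (lastState s₀ (l.take n)) (l.get ⟨n, hn⟩).1 (l.get ⟨n, hn⟩).2
            ∂(rootSamplingMeasure P b₀ s₀ (l.take n))) < ∞) :
    rootSamplingMeasure P b₀ s₀ l =
      b₀.withDensity fun θ => lik P θ s₀ l / ∫⁻ θ', lik P θ' s₀ l ∂b₀ := by
  clear hZtildePos hZtildeFin hPsum
  have key : ∀ n : ℕ, n ≤ l.length →
      rootSamplingMeasure P b₀ s₀ (l.take n) =
        b₀.withDensity fun θ => lik P θ s₀ (l.take n) / ∫⁻ θ', lik P θ' s₀ (l.take n) ∂b₀ := by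
    intro n
    induction n with
    | zero =>
        intro _
        simp [rootSamplingMeasure, lik, lintegral_one]
    | succ n ih =>
        intro hsucc
        have hn : n < l.length := hsucc
        have IH := ih (le_of_lt hn)
        set Zn := ∫⁻ θ, lik P θ s₀ (l.take n) ∂b₀ with hZn
        set Zn1 := ∫⁻ θ, lik P θ s₀ (l.take (n + 1)) ∂b₀ with hZn1
        have hZn0 : Zn ≠ 0 := (hZpos n).ne'
        have hZnfin : Zn ≠ ∞ := (hZfin n).ne
        have hZn10 : Zn1 ≠ 0 := (hZpos (n + 1)).ne'
        have hZn1fin : Zn1 ≠ ∞ := (hZfin (n + 1)).ne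
        cases hx : l.get ⟨n, hn⟩ with
        | mk a s' =>
        set sN := lastState s₀ (l.take n) with hsN
        have htake : l.take (n + 1) = l.take n ++ [(a, s')] := by
          rw [← List.take_concat_get' l n hn]
          have hx' : l[n] = (a, s') := by simpa [List.get_eq_getElem] using hx
          rw [hx']
        have hlik1 : ∀ θ, lik P θ s₀ (l.take (n + 1)) =
            lik P θ s₀ (l.take n) * P θ sN a s' := by
          intro θ
          rw [htake, lik_append]
          simp [lik, ← hsN]
        have flikmeas : Measurable fun θ => lik P θ s₀ (l.take n) :=
          lik_measurable P hPmeas (l.take n) s₀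
        have fmeas : Measurable fun θ => lik P θ s₀ (l.take n) / Zn :=
          flikmeas.div measurable_const
        have hnorm : (∫⁻ θ', P θ' sN a s'
              ∂(b₀.withDensity fun θ => lik P θ s₀ (l.take n) / Zn)) = Zn1 / Zn := by
          rw [lintegral_withDensity_eq_lintegral_mul _ fmeas (hPmeas sN a s')]
          simp only [Pi.mul_apply, div_eq_mul_inv]
          calc ∫⁻ θ, lik P θ s₀ (l.take n) * Zn⁻¹ * P θ sN a s' ∂b₀
              = ∫⁻ θ, lik P θ s₀ (l.take n) * P θ sN a s' * Zn⁻¹ ∂b₀ := by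
                congr 1; funext θ; ring
            _ = (∫⁻ θ, lik P θ s₀ (l.take n) * P θ sN a s' ∂b₀) * Zn⁻¹ :=
                lintegral_mul_const _ (flikmeas.mul (hPmeas sN a s'))
            _ = Zn1 * Zn⁻¹ := by
                congr 1
                rw [hZn1]
                exact (lintegral_congr fun θ => (hlik1 θ)).symm
        rw [htake, rSM_append, IH]
        show rootSamplingMeasure P _ sN [(a, s')] = _
        rw [show rootSamplingMeasure P
            (b₀.withDensity fun θ => lik P θ s₀ (l.take n) / Zn) sN [(a, s')] =
            (b₀.withDensity fun θ => lik P θ s₀ (l.take n) / Zn).withDensity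
              fun θ => P θ sN a s' / ∫⁻ θ', P θ' sN a s'
                ∂(b₀.withDensity fun θ => lik P θ s₀ (l.take n) / Zn) from rfl]
        rw [hnorm, ← withDensity_mul _ fmeas (show Measurable fun θ => P θ sN a s' / (Zn1 / Zn) from
          (hPmeas sN a s').div measurable_const)]
        congr 1
        funext θ
        have hcancel : Zn⁻¹ * Zn = 1 := ENNReal.inv_mul_cancel hZn0 hZnfin
        have hinv : (Zn1 * Zn⁻¹)⁻¹ = Zn * Zn1⁻¹ := by
          rw [← div_eq_mul_inv, ENNReal.inv_div (Or.inr hZn1fin) (Or.inr hZn10),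
            div_eq_mul_inv]
        simp only [Pi.mul_apply]
        have hl : lik P θ s₀ (List.take n l ++ [(a, s')]) =
            lik P θ s₀ (List.take n l) * P θ sN a s' := by
          rw [lik_append]; simp [lik, ← hsN]
        simp only [div_eq_mul_inv]
        rw [hl, hinv]
        calc lik P θ s₀ (l.take n) * Zn⁻¹ * (P θ sN a s' * (Zn * Zn1⁻¹))
            = lik P θ s₀ (l.take n) * P θ sN a s' * Zn1⁻¹ * (Zn⁻¹ * Zn) := by ring
          _ = lik P θ s₀ (l.take n) * P θ sN a s' * Zn1⁻¹ := by rw [hcancel, mul_one]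
  have := key l.length le_rfl
  simpa using this
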